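/- Let X be a finite temporal transit and S ⊆ X. Then Z[S] := {y ∈ X : ∃ x ∈ S, x Z y} is an archival upward-closed subset of X. -/

import Mathlib

/-- A subset `S` of a temporal transit is archival. -/
def Archival {X : Type*} [PartialOrder X] (R : X → X → Prop) (S : Set X) : Prop :=
  ∀ z x : X, R x z → x ∉ S → z ∈ S → ∃ y ∈ S, x ≤ y ∧ R y z

/-- `x B w` iff `w ≤ x` and no point strictly between `w` and `x`
(inclusive of `x`) is reflexive. -/
def Brel {X : Type*} [PartialOrder X] (R : X → X → Prop) (x w : X) : Prop :=
  w ≤ x ∧ ∀ y : X, w < y → y ≤ x → ¬ R y y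

/-- `Z` is the reflexive-transitive closure of "descend via `B`, then go up via `≤`". -/
def Zrel {X : Type*} [PartialOrder X] (R : X → X → Prop) : X → X → Prop :=
  Relation.ReflTransGen (fun x z : X => ∃ w : X, Brel R x w ∧ w ≤ z)

/-- The `Z`-image of any subset is an archival upward-closed subset. -/
theorem stmt14 {X : Type*} [PartialOrder X] [Finite X] (R : X → X → Prop)
    (htr : ∀ x y : X, x ≤ y ↔ R x y ∨ x = y)
    (S : Set X) :
    Archival R {y : X | ∃ x ∈ S, Zrel R x y} ∧
    (∀ a b : X, a ∈ {y : X | ∃ x ∈ S, Zrel R x y} → a ≤ b →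
      b ∈ {y : X | ∃ x ∈ S, Zrel R x y}) := by
  set T : Set X := {y : X | ∃ x ∈ S, Zrel R x y} with hT
  have hstep : ∀ a b : X, a ∈ T → (∃ w : X, Brel R a w ∧ w ≤ b) → b ∈ T := by
    rintro a b ⟨s, hs, hz⟩ h
    exact ⟨s, hs, hz.tail h⟩
  have hup : ∀ a b : X, a ∈ T → a ≤ b → b ∈ T := by
    intro a b ha hab
    exact hstep a b ha ⟨a, ⟨le_rfl, fun y h1 h2 _ => lt_irrefl a (h1.trans_le h2)⟩, hab⟩
  refine ⟨?_, hup⟩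
  intro z x hRxz hxT hzT
  have hxz : x ≤ z := (htr x z).2 (Or.inl hRxz)
  by_cases hRzz : R z z
  · exact ⟨z, hzT, hxz, hRzz⟩
  · have hxltz : x < z := lt_of_le_of_ne hxz (by rintro rfl; exact hxT hzT)
    by_cases hA : ({y : X | x ≤ y ∧ y < z ∧ R y y} : Set X).Nonempty
    · obtain ⟨y, hy, hmax⟩ : ∃ y ∈ ({y : X | x ≤ y ∧ y < z ∧ R y y} : Set X),
          ∀ a' ∈ ({y : X | x ≤ y ∧ y < z ∧ R y y} : Set X), id y ≤ id a' → id y = id a' := by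
        obtain ⟨y, hy, hm⟩ := (Set.toFinite {y : X | x ≤ y ∧ y < z ∧ R y y}).exists_maximal hA
        exact ⟨y, hy, fun a ha h => le_antisymm h (hm ha h)⟩
      obtain ⟨hxy, hyz, hRyy⟩ := hy
      have hByz : Brel R z y := by
        refine ⟨hyz.le, fun v hv1 hv2 hRvv => ?_⟩
        have hvz : v < z := lt_of_le_of_ne hv2 (by rintro rfl; exact hRzz hRvv)
        have := hmax v ⟨hxy.trans hv1.le, hvz, hRvv⟩ hv1.le
        exact absurd this hv1.ne
      have hyT : y ∈ T := hstep z y hzT ⟨y, hByz, le_rfl⟩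
      have hRyz : R y z := by
        rcases (htr y z).1 hyz.le with h | h
        · exact h
        · exact absurd h hyz.ne
      exact ⟨y, hyT, hxy, hRyz⟩
    · exfalso
      apply hxT
      refine hstep z x hzT ⟨x, ⟨hxz, fun v hv1 hv2 hRvv => ?_⟩, le_rfl⟩
      exact hA ⟨v, hv1.le, lt_of_le_of_ne hv2 (by rintro rfl; exact hRzz hRvv), hRvv⟩
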